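/- arXiv:1610.03609 — 2 statements merged into one kernel-verified Lean document; each statement's English description precedes it below -/
import Mathlib

section
/- A pre-augmented tree (X, 𝓔) with 𝓔 = 𝓔_v ∪ 𝓔_h is Gromov hyperbolic if and only if there exists a constant L > 0 such that every horizontal geodesic in (X, 𝓔) has length at most L. -/
open Metric Filter

namespace HypIFS

/-- A rooted tree: a connected, locally finite simple graph with no cycles
and a distinguished root. -/
structure RootedTree (X : Type*) where
  G : SimpleGraph X
  isTree : G.IsTree
  locFin : ∀ x : X, {y | G.Adj x y}.Finite
  root : X

variable {X : Type*}

/-- the level `|x|` of a vertex: graph distance from the root. -/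
noncomputable def lvl (T : RootedTree X) (x : X) : ℕ := T.G.dist T.root x

/-- `p` is the parent `x⁻¹` of `x`. -/
def IsParent (T : RootedTree X) (p x : X) : Prop :=
  T.G.Adj p x ∧ lvl T p + 1 = lvl T x

/-- The graph `(X, 𝓔_v ∪ 𝓔_h)`. -/
def augGraph (T : RootedTree X) (Eh : X → X → Prop) : SimpleGraph X where
  Adj x y := (T.G.Adj x y ∨ Eh x y ∨ Eh y x) ∧ x ≠ y
  symm := ⟨by
    rintro x y ⟨h1 | h2 | h3, hne⟩
    · exact ⟨Or.inl h1.symm, hne.symm⟩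
    · exact ⟨Or.inr (Or.inr h2), hne.symm⟩
    · exact ⟨Or.inr (Or.inl h3), hne.symm⟩⟩
  loopless := ⟨fun x h => h.2 rfl⟩

/-- The Gromov product `|x ∧ y| = ½(|x| + |y| − d(x,y))` with respect to a root `o`. -/
noncomputable def gprod {V : Type*} (G : SimpleGraph V) (o x y : V) : ℝ :=
  ((G.dist o x : ℝ) + (G.dist o y : ℝ) - (G.dist x y : ℝ)) / 2

/-- Gromov hyperbolicity of a graph with basepoint `o`. -/
def GromovHyperbolic {V : Type*} (G : SimpleGraph V) (o : V) : Prop :=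
  ∃ δ : ℝ, 0 ≤ δ ∧ ∀ x y z : V,
    min (gprod G o x z) (gprod G o z y) - δ ≤ gprod G o x y

/-- `w 0, w 1, …, w n` is a horizontal geodesic of length `n` in the graph
`(X, 𝓔_v ∪ 𝓔_h)`: consecutive vertices joined by horizontal edges, all vertices
in one level, and the path has minimal length. -/
def IsHorizGeodesic (T : RootedTree X) (Eh : X → X → Prop) (n : ℕ) (w : ℕ → X) : Prop :=
  (∀ i < n, Eh (w i) (w (i + 1)) ∧ w i ≠ w (i + 1)) ∧
  (∀ i ≤ n, lvl T (w i) = lvl T (w 0)) ∧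
  (augGraph T Eh).dist (w 0) (w n) = n

section AuxLemmas

variable (T : RootedTree X)

lemma treeConn : T.G.Connected := T.isTree.isConnected

/-- generic chain-distance lemma -/
lemma dist_le_of_chain {V : Type*} {G : SimpleGraph V} (hc : G.Connected)
    (f : ℕ → V) (n : ℕ) (h : ∀ i < n, G.Adj (f i) (f (i+1)) ∨ f i = f (i+1)) :
    G.dist (f 0) (f n) ≤ n := by
  induction n with
  | zero => simp
  | succ n ih =>
    have h1 : G.dist (f 0) (f n) ≤ n := ih (fun i hi => h i (by omega))
    have h2 : G.dist (f n) (f (n+1)) ≤ 1 := by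
      rcases h n (by omega) with h' | h'
      · exact SimpleGraph.dist_le h'.toWalk
      · rw [h', SimpleGraph.dist_self]; omega
    calc G.dist (f 0) (f (n+1)) ≤ G.dist (f 0) (f n) + G.dist (f n) (f (n+1)) :=
          hc.dist_triangle
      _ ≤ n + 1 := by omega

lemma exists_geo {V : Type*} {G : SimpleGraph V} (hc : G.Connected) (x y : V) :
    ∃ f : ℕ → V, f 0 = x ∧ f (G.dist x y) = y ∧ ∀ i < G.dist x y, G.Adj (f i) (f (i+1)) := by
  obtain ⟨w, hw⟩ := hc.exists_walk_length_eq_dist x y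
  exact ⟨w.getVert, w.getVert_zero, by rw [← hw]; exact w.getVert_length,
    fun i hi => w.adj_getVert_succ (by omega)⟩

/-- the chosen tree geodesic from the root -/
noncomputable def treeGeo (x : X) : T.G.Walk T.root x :=
  (treeConn T |>.exists_walk_length_eq_dist T.root x).choose

lemma treeGeo_length (x : X) : (treeGeo T x).length = lvl T x :=
  (treeConn T |>.exists_walk_length_eq_dist T.root x).choose_spec

lemma treeGeo_isPath (x : X) : (treeGeo T x).IsPath :=
  (treeGeo T x).isPath_of_length_eq_dist (treeGeo_length T x)

/-- the ancestor of `x` at level `k` -/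
noncomputable def anc (k : ℕ) (x : X) : X := (treeGeo T x).getVert k

lemma anc_self (x : X) : anc T (lvl T x) x = x := by
  rw [anc, ← treeGeo_length T x]; exact (treeGeo T x).getVert_length

lemma anc_lvl {k : ℕ} {x : X} (hk : k ≤ lvl T x) : lvl T (anc T k x) = k := by
  have h1 : T.G.dist T.root (anc T k x) ≤ k := by
    have := dist_le_of_chain (treeConn T) (fun i => (treeGeo T x).getVert i) k
      (fun i hi => Or.inl ((treeGeo T x).adj_getVert_succ (by rw [treeGeo_length]; omega)))
    simpa [anc] using this
  have h2 : T.G.dist (anc T k x) x ≤ lvl T x - k := by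
    have := dist_le_of_chain (treeConn T) (fun i => (treeGeo T x).getVert (k + i)) (lvl T x - k)
      (fun i hi => Or.inl (by
        have : T.G.Adj ((treeGeo T x).getVert (k+i)) ((treeGeo T x).getVert (k+i+1)) :=
          (treeGeo T x).adj_getVert_succ (by rw [treeGeo_length]; omega)
        simpa [Nat.add_assoc] using this))
    simp only [Nat.add_zero] at this
    have he : k + (lvl T x - k) = lvl T x := by omega
    rw [he] at this
    rw [(treeGeo T x).getVert_of_length_le (le_of_eq (treeGeo_length T x))] at this
    simpa [anc] using this
  have h3 : lvl T x ≤ T.G.dist T.root (anc T k x) + (lvl T x - k) := by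
    calc lvl T x = T.G.dist T.root x := rfl
      _ ≤ T.G.dist T.root (anc T k x) + T.G.dist (anc T k x) x := (treeConn T).dist_triangle
      _ ≤ T.G.dist T.root (anc T k x) + (lvl T x - k) := by omega
  have : lvl T (anc T k x) = T.G.dist T.root (anc T k x) := rfl
  omega

lemma anc_adj {k : ℕ} {x : X} (hk : k < lvl T x) :
    T.G.Adj (anc T k x) (anc T (k+1) x) :=
  (treeGeo T x).adj_getVert_succ (by rw [treeGeo_length]; omega)

lemma anc_isParent {k : ℕ} {x : X} (hk : k < lvl T x) :
    IsParent T (anc T k x) (anc T (k+1) x) :=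
  ⟨anc_adj T hk, by rw [anc_lvl T (by omega : k ≤ lvl T x), anc_lvl T (by omega : k+1 ≤ lvl T x)]⟩

lemma treeGeo_unique {x : X} (w : T.G.Walk T.root x) (hw : w.length = lvl T x) :
    w = treeGeo T x := by
  have h1 : w.IsPath := w.isPath_of_length_eq_dist hw
  have := T.isTree.IsAcyclic.path_unique ⟨w, h1⟩ ⟨treeGeo T x, treeGeo_isPath T x⟩
  exact congrArg Subtype.val this

lemma lvl_of_mem_support {x u : X} (hu : u ∈ (treeGeo T x).support) :
    ∃ i ≤ lvl T x, (treeGeo T x).getVert i = u ∧ lvl T u = i := by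
  rw [SimpleGraph.Walk.mem_support_iff_exists_getVert] at hu
  obtain ⟨i, hgv, hi⟩ := hu
  rw [treeGeo_length] at hi
  exact ⟨i, hi, hgv, by rw [← hgv]; exact anc_lvl T hi⟩

lemma anc_of_parent {p x : X} (hp : IsParent T p x) :
    ∀ k ≤ lvl T p, anc T k x = anc T k p := by
  intro k hk
  have hx : x ∉ (treeGeo T p).support := by
    intro hmem
    obtain ⟨i, hi, hgv, hlv⟩ := lvl_of_mem_support T hmem
    have := hp.2
    omega
  have hpath : ((treeGeo T p).concat hp.1).IsPath := by
    rw [SimpleGraph.Walk.isPath_def, SimpleGraph.Walk.support_concat]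
    rw [List.nodup_append]
    refine ⟨(treeGeo_isPath T p).2, List.nodup_singleton x, ?_⟩
    intro a ha b hb hab
    simp only [List.mem_singleton] at hb
    subst hb; subst hab; exact hx ha
  have hlen : ((treeGeo T p).concat hp.1).length = lvl T x := by
    rw [SimpleGraph.Walk.length_concat, treeGeo_length]; exact hp.2
  have huniq := treeGeo_unique T _ hlen
  have : anc T k x = ((treeGeo T p).concat hp.1).getVert k := by
    rw [anc, ← huniq]
  rw [this, SimpleGraph.Walk.concat_eq_append, SimpleGraph.Walk.getVert_append]
  rw [treeGeo_length]
  by_cases h : k < lvl T p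
  · simp [h, anc]
  · have : k = lvl T p := by omega
    subst this
    simp only [lt_irrefl, if_false, Nat.sub_self]
    rw [SimpleGraph.Walk.getVert_zero, anc, ← treeGeo_length T p,
      SimpleGraph.Walk.getVert_length]

lemma tree_adj_lvl {u v : X} (h : T.G.Adj u v) :
    lvl T u + 1 = lvl T v ∨ lvl T v + 1 = lvl T u := by
  have hd1 : lvl T v ≤ lvl T u + 1 := by
    have : T.G.dist T.root v ≤ T.G.dist T.root u + T.G.dist u v := (treeConn T).dist_triangle
    have h2 : T.G.dist u v ≤ 1 := SimpleGraph.dist_le h.toWalk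
    simpa [lvl] using by omega
  have hd2 : lvl T u ≤ lvl T v + 1 := by
    have : T.G.dist T.root u ≤ T.G.dist T.root v + T.G.dist v u := (treeConn T).dist_triangle
    have h2 : T.G.dist v u ≤ 1 := SimpleGraph.dist_le h.symm.toWalk
    simpa [lvl] using by omega
  have hne : lvl T u ≠ lvl T v := by
    intro he
    have hv : v ∉ (treeGeo T u).support := by
      intro hmem
      obtain ⟨i, hi, hgv, hlv⟩ := lvl_of_mem_support T hmem
      have : i = lvl T u := by omega
      subst this
      have hu : (treeGeo T u).getVert (lvl T u) = u :=
        (treeGeo T u).getVert_of_length_le (le_of_eq (treeGeo_length T u))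
      exact h.ne (hu.symm.trans hgv)
    have hpath : ((treeGeo T u).concat h).IsPath := by
      rw [SimpleGraph.Walk.isPath_def, SimpleGraph.Walk.support_concat]
      rw [List.nodup_append]
      refine ⟨(treeGeo_isPath T u).2, List.nodup_singleton v, ?_⟩
      intro a ha b hb hab
      simp only [List.mem_singleton] at hb
      subst hb; subst hab; exact hv ha
    have := T.isTree.IsAcyclic.path_unique ⟨_, hpath⟩ ⟨treeGeo T v, treeGeo_isPath T v⟩
    have hlen := congrArg (fun w => SimpleGraph.Walk.length w) (congrArg Subtype.val this)
    simp only [SimpleGraph.Walk.length_concat, treeGeo_length] at hlen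
    omega
  omega

lemma anc_anc {k m : ℕ} {x : X} (hkm : k ≤ m) (hmx : m ≤ lvl T x) :
    anc T k (anc T m x) = anc T k x := by
  obtain ⟨j, hj⟩ : ∃ j, lvl T x = m + j := ⟨lvl T x - m, by omega⟩
  induction j generalizing x with
  | zero =>
    have : m = lvl T x := by omega
    subst this; rw [anc_self]
  | succ j ih =>
    have h1 : m + j < lvl T x := by omega
    have hpar : IsParent T (anc T (m+j) x) x := by
      have := anc_isParent T (show m + j < lvl T x by omega)
      rwa [show m + j + 1 = lvl T x by omega, anc_self] at this
    have hlvlp : lvl T (anc T (m+j) x) = m + j := anc_lvl T (by omega)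
    rw [anc_of_parent T hpar m (by omega), anc_of_parent T hpar k (by omega)]
    exact ih (by omega) (by omega)


end AuxLemmas

section Chains
variable {Y : Type*}

/-- abstract chains -/
def Chain' (R : Y → Y → Prop) (n : ℕ) (u v : Y) : Prop :=
  ∃ f : ℕ → Y, f 0 = u ∧ f n = v ∧ ∀ i < n, R (f i) (f (i+1))

lemma chain_nil {R : Y → Y → Prop} (u : Y) : Chain' R 0 u u :=
  ⟨fun _ => u, rfl, rfl, by omega⟩

lemma chain_cons {R : Y → Y → Prop} {n : ℕ} {u u' v : Y}
    (h : R u u') (hc : Chain' R n u' v) : Chain' R (n+1) u v := by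
  obtain ⟨f, h0, hn, hs⟩ := hc
  refine ⟨fun i => if i = 0 then u else f (i-1), by simp, by simp [hn], ?_⟩
  intro i hi
  rcases Nat.eq_zero_or_pos i with h' | h'
  · subst h'; simpa [h0] using h
  · have : i ≠ 0 := by omega
    simp only [this, if_false, Nat.add_eq_zero, and_false, if_false]
    have : i + 1 - 1 = (i - 1) + 1 := by omega
    rw [this]
    exact hs (i-1) (by omega)

lemma chain_append {R : Y → Y → Prop} {m n : ℕ} {u v w : Y}
    (h1 : Chain' R m u v) (h2 : Chain' R n v w) : Chain' R (m+n) u w := by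
  obtain ⟨f, hf0, hfm, hfs⟩ := h1
  obtain ⟨g, hg0, hgn, hgs⟩ := h2
  refine ⟨fun i => if i ≤ m then f i else g (i - m), by simp [hf0], ?_, ?_⟩
  · show (if m + n ≤ m then f (m+n) else g (m+n-m)) = w
    rcases Nat.eq_zero_or_pos n with hn | hn
    · subst hn
      simp only [Nat.add_zero, le_refl, if_true]
      rw [hfm, ← hg0]; exact hgn
    · have hmn : ¬ (m + n ≤ m) := by omega
      simp only [hmn, if_false, Nat.add_sub_cancel_left, hgn]
  · intro i hi
    show R (if i ≤ m then f i else g (i-m)) (if i+1 ≤ m then f (i+1) else g (i+1-m))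
    by_cases h : i + 1 ≤ m
    · simp only [show i ≤ m by omega, if_true, h, if_true]
      exact hfs i (by omega)
    · by_cases h' : i ≤ m
      · have : i = m := by omega
        subst this
        simp only [le_refl, if_true, h, if_false, Nat.add_sub_cancel_left]
        rw [hfm, ← hg0]
        exact hgs 0 (by omega)
      · simp only [h', if_false, h, if_false]
        have h1 : i + 1 - m = (i - m) + 1 := by omega
        rw [h1]
        exact hgs (i - m) (by omega)

lemma chain_reverse {R : Y → Y → Prop} (hsym : ∀ a b, R a b → R b a)
    {n : ℕ} {u v : Y} (h : Chain' R n u v) : Chain' R n v u := by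
  obtain ⟨f, h0, hn, hs⟩ := h
  refine ⟨fun i => f (n - i), by simp [hn], by simp [h0], ?_⟩
  intro i hi
  show R (f (n - i)) (f (n - (i+1)))
  have h1 : n - i = (n - (i+1)) + 1 := by omega
  rw [h1]
  exact hsym _ _ (hs (n - (i+1)) (by omega))

lemma chain_map {Z : Type*} {R : Y → Y → Prop} {R' : Z → Z → Prop} (φ : Y → Z)
    (hR : ∀ a b, R a b → R' (φ a) (φ b)) {n : ℕ} {u v : Y}
    (h : Chain' R n u v) : Chain' R' n (φ u) (φ v) := by
  obtain ⟨f, h0, hn, hs⟩ := h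
  exact ⟨fun i => φ (f i), by show φ (f 0) = φ u; rw [h0], by show φ (f n) = φ v; rw [hn],
    fun i hi => hR _ _ (hs i hi)⟩

lemma chain_dist {V : Type*} {G : SimpleGraph V} (hc : G.Connected)
    {R : V → V → Prop} (hadj : ∀ a b, R a b → G.Adj a b ∨ a = b)
    {n : ℕ} {u v : V} (h : Chain' R n u v) : G.dist u v ≤ n := by
  obtain ⟨f, h0, hn, hs⟩ := h
  rw [← h0, ← hn]
  exact dist_le_of_chain hc f n (fun i hi => hadj _ _ (hs i hi))
end Chains

section Aux2
variable (T : RootedTree X) (Eh : X → X → Prop)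

/-- symmetrized horizontal relation -/
def Es (x y : X) : Prop := Eh x y ∨ Eh y x

lemma es_symm {x y : X} (h : Es Eh x y) : Es Eh y x := h.symm

lemma es_lvl (hlvl : ∀ x y, Eh x y → lvl T x = lvl T y) {x y : X} (h : Es Eh x y) :
    lvl T x = lvl T y := by
  rcases h with h | h
  · exact hlvl x y h
  · exact (hlvl y x h).symm

lemma es_eh (hsymm : ∀ x y, Eh x y → Eh y x) {x y : X} (h : Es Eh x y) : Eh x y := by
  rcases h with h | h
  · exact h
  · exact hsymm y x h

lemma es_ne (hsymm : ∀ x y, Eh x y → Eh y x) (hne : ∀ x y, Eh x y → x ≠ y)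
    {x y : X} (h : Es Eh x y) : x ≠ y := hne x y (es_eh Eh hsymm h)

lemma es_adj (hsymm : ∀ x y, Eh x y → Eh y x) (hne : ∀ x y, Eh x y → x ≠ y)
    {x y : X} (h : Es Eh x y) : (augGraph T Eh).Adj x y :=
  ⟨Or.inr (Or.inl (es_eh Eh hsymm h)), es_ne Eh hsymm hne h⟩

lemma augLe : T.G ≤ augGraph T Eh := @fun a b h => ⟨Or.inl h, h.ne⟩

lemma augConn : (augGraph T Eh).Connected := (treeConn T).mono (augLe T Eh)

lemma es_parents (hpar : ∀ x y p q, Eh x y → IsParent T p x → IsParent T q y → p = q ∨ Eh p q)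
    {x y p q : X} (h : Es Eh x y) (hp : IsParent T p x) (hq : IsParent T q y) :
    p = q ∨ Es Eh p q := by
  rcases h with h | h
  · rcases hpar x y p q h hp hq with h' | h'
    · exact Or.inl h'
    · exact Or.inr (Or.inl h')
  · rcases hpar y x q p h hq hp with h' | h'
    · exact Or.inl h'.symm
    · exact Or.inr (Or.inr h')

lemma aug_adj_cases (hlvl : ∀ x y, Eh x y → lvl T x = lvl T y)
    {u v : X} (h : (augGraph T Eh).Adj u v) :
    IsParent T u v ∨ IsParent T v u ∨ (Es Eh u v ∧ lvl T u = lvl T v) := by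
  rcases h.1 with h' | h' | h'
  · rcases tree_adj_lvl T h' with hl | hl
    · exact Or.inl ⟨h', hl⟩
    · exact Or.inr (Or.inl ⟨h'.symm, hl⟩)
  · exact Or.inr (Or.inr ⟨Or.inl h', hlvl u v h'⟩)
  · exact Or.inr (Or.inr ⟨Or.inr h', (hlvl v u h').symm⟩)

lemma aug_adj_lvl (hlvl : ∀ x y, Eh x y → lvl T x = lvl T y)
    {u v : X} (h : (augGraph T Eh).Adj u v) : lvl T v ≤ lvl T u + 1 := by
  rcases aug_adj_cases T Eh hlvl h with h' | h' | h'
  · have := h'.2; omega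
  · have := h'.2; omega
  · omega

/-- strict horizontal step at level `k` -/
def HStep (k : ℕ) (x y : X) : Prop := Es Eh x y ∧ lvl T x = k ∧ lvl T y = k

/-- lazy horizontal step at level `k` -/
def LStep (k : ℕ) (x y : X) : Prop := (x = y ∨ Es Eh x y) ∧ lvl T x = k ∧ lvl T y = k

lemma es_proj (hlvl : ∀ x y, Eh x y → lvl T x = lvl T y)
    (hpar : ∀ x y p q, Eh x y → IsParent T p x → IsParent T q y → p = q ∨ Eh p q)
    (k : ℕ) :
    ∀ (j : ℕ) (u v : X), Es Eh u v → lvl T u = lvl T v → lvl T u = k + j →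
      anc T k u = anc T k v ∨ Es Eh (anc T k u) (anc T k v) := by
  intro j
  induction j with
  | zero =>
    intro u v h hl hk
    have hu : anc T k u = u := by
      rw [show k = lvl T u by omega]; exact anc_self T u
    have hv : anc T k v = v := by
      rw [show k = lvl T v by omega]; exact anc_self T v
    rw [hu, hv]; exact Or.inr h
  | succ j ih =>
    intro u v h hl hk
    have hpu : IsParent T (anc T (k+j) u) u := by
      have := anc_isParent T (show k + j < lvl T u by omega)
      rwa [show k + j + 1 = lvl T u by omega, anc_self T u] at this
    have hpv : IsParent T (anc T (k+j) v) v := by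
      have := anc_isParent T (show k + j < lvl T v by omega)
      rwa [show k + j + 1 = lvl T v by omega, anc_self T v] at this
    have e1 : anc T k u = anc T k (anc T (k+j) u) :=
      (anc_anc T (by omega) (by omega : k + j ≤ lvl T u)).symm
    have e2 : anc T k v = anc T k (anc T (k+j) v) :=
      (anc_anc T (by omega) (by omega : k + j ≤ lvl T v)).symm
    rcases es_parents T Eh hpar h hpu hpv with h' | h'
    · rw [e1, e2, h']
      exact Or.inl rfl
    · rw [e1, e2]
      exact ih _ _ h' (by rw [anc_lvl T (by omega : k+j ≤ lvl T u),
        anc_lvl T (by omega : k+j ≤ lvl T v)]) (anc_lvl T (by omega : k+j ≤ lvl T u))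

lemma descend (hlvl : ∀ x y, Eh x y → lvl T x = lvl T y)
    (hpar : ∀ x y p q, Eh x y → IsParent T p x → IsParent T q y → p = q ∨ Eh p q)
    (k : ℕ) :
    ∀ (n : ℕ) (f : ℕ → X), (∀ i < n, (augGraph T Eh).Adj (f i) (f (i+1))) →
      (∀ i ≤ n, k ≤ lvl T (f i)) → lvl T (f n) = k →
      ∃ h, Chain' (HStep T Eh k) h (anc T k (f 0)) (f n) ∧ h + (lvl T (f 0) - k) ≤ n := by
  intro n
  induction n with
  | zero =>
    intro f hadj hge hk
    refine ⟨0, ?_, by omega⟩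
    have : anc T k (f 0) = f 0 := by
      rw [show k = lvl T (f 0) from hk.symm]; exact anc_self T (f 0)
    rw [this]
    exact chain_nil (f 0)
  | succ n ih =>
    intro f hadj hge hk
    obtain ⟨h', hc, hb⟩ := ih (fun i => f (i+1)) (fun i hi => hadj (i+1) (by omega))
      (fun i hi => hge (i+1) (by omega)) hk
    have hk0 : k ≤ lvl T (f 0) := hge 0 (by omega)
    have hk1 : k ≤ lvl T (f 1) := hge 1 (by omega)
    rcases aug_adj_cases T Eh hlvl (hadj 0 (by omega)) with hp | hp | hp
    · -- f 0 is parent of f 1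
      have he : anc T k (f 1) = anc T k (f 0) := anc_of_parent T hp k hk0
      refine ⟨h', by rwa [he] at hc, ?_⟩
      have := hp.2; omega
    · -- f 1 is parent of f 0
      have he : anc T k (f 0) = anc T k (f 1) := anc_of_parent T hp k hk1
      refine ⟨h', by rwa [← he] at hc, ?_⟩
      have := hp.2; omega
    · -- horizontal step
      rcases es_proj T Eh hlvl hpar k (lvl T (f 0) - k) (f 0) (f 1) hp.1 hp.2 (by omega)
        with h'' | h''
      · refine ⟨h', by rwa [← h''] at hc, by omega⟩
      · refine ⟨h' + 1, ?_, by omega⟩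
        exact chain_cons ⟨h'', anc_lvl T hk0, anc_lvl T hk1⟩ hc

lemma dist_anc {k : ℕ} {x : X} (hk : k ≤ lvl T x) :
    (augGraph T Eh).dist x (anc T k x) ≤ lvl T x - k := by
  have := dist_le_of_chain (augConn T Eh) (fun i => anc T (lvl T x - i) x) (lvl T x - k)
    (fun i hi => by
      have hs : lvl T x - i = (lvl T x - (i+1)) + 1 := by omega
      refine Or.inl ?_
      have := (anc_adj T (show lvl T x - (i+1) < lvl T x by omega)).symm
      have h2 := augLe T Eh this
      show (augGraph T Eh).Adj (anc T (lvl T x - i) x) (anc T (lvl T x - (i+1)) x)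
      rw [hs]
      exact h2)
  simp only [Nat.sub_zero] at this
  rw [anc_self T x, show lvl T x - (lvl T x - k) = k by omega] at this
  exact this

lemma lvl_le_chain (hlvl : ∀ x y, Eh x y → lvl T x = lvl T y)
    (n : ℕ) (f : ℕ → X) (hadj : ∀ i < n, (augGraph T Eh).Adj (f i) (f (i+1))) :
    lvl T (f n) ≤ lvl T (f 0) + n := by
  induction n with
  | zero => omega
  | succ n ih =>
    have h1 := ih (fun i hi => hadj i (by omega))
    have h2 := aug_adj_lvl T Eh hlvl (hadj n (by omega))
    omega

lemma lvl_root : lvl T T.root = 0 := SimpleGraph.dist_self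

lemma dist_root (hlvl : ∀ x y, Eh x y → lvl T x = lvl T y) (x : X) :
    (augGraph T Eh).dist T.root x = lvl T x := by
  refine le_antisymm ?_ ?_
  · rw [SimpleGraph.dist_comm]
    have := dist_anc T Eh (show 0 ≤ lvl T x by omega)
    have h0 : anc T 0 x = T.root := by
      have := anc_lvl T (show 0 ≤ lvl T x by omega)
      rw [lvl] at this
      exact ((treeConn T).dist_eq_zero_iff.mp this).symm
    rw [h0] at this
    omega
  · obtain ⟨f, h0, hd, hadj⟩ := exists_geo (augConn T Eh) T.root x
    have := lvl_le_chain T Eh hlvl _ f hadj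
    rw [h0, hd, lvl_root] at this
    omega

end Aux2

section Main
variable (T : RootedTree X) (Eh : X → X → Prop)

lemma normal_form
    (hsymm : ∀ x y, Eh x y → Eh y x)
    (hne : ∀ x y, Eh x y → x ≠ y)
    (hlvl : ∀ x y, Eh x y → lvl T x = lvl T y)
    (hpar : ∀ x y p q, Eh x y → IsParent T p x → IsParent T q y → p = q ∨ Eh p q)
    {L : ℕ} (hL : ∀ (n : ℕ) (w : ℕ → X), IsHorizGeodesic T Eh n w → n ≤ L) (x y : X) :
    ∃ k h, k ≤ lvl T x ∧ k ≤ lvl T y ∧ h ≤ L ∧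
      Chain' (HStep T Eh k) h (anc T k x) (anc T k y) ∧
      (augGraph T Eh).dist x y = (lvl T x - k) + (lvl T y - k) + h := by
  obtain ⟨f, hf0, hfd, hadj⟩ := exists_geo (augConn T Eh) x y
  set d := (augGraph T Eh).dist x y with hd
  -- the minimal level along the geodesic
  have hSne : ((Finset.range (d+1)).image (fun i => lvl T (f i))).Nonempty :=
    ⟨lvl T (f 0), Finset.mem_image.mpr ⟨0, Finset.mem_range.mpr (by omega), rfl⟩⟩
  set k := ((Finset.range (d+1)).image (fun i => lvl T (f i))).min' hSne with hkdef
  have hmin : ∀ i ≤ d, k ≤ lvl T (f i) := by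
    intro i hi
    exact Finset.min'_le _ _ (Finset.mem_image.mpr ⟨i, Finset.mem_range.mpr (by omega), rfl⟩)
  obtain ⟨i0, hi0d, hi0⟩ : ∃ i0 ≤ d, lvl T (f i0) = k := by
    have := Finset.min'_mem _ hSne
    rw [← hkdef] at this
    obtain ⟨i, hi, hieq⟩ := Finset.mem_image.mp this
    refine ⟨i, ?_, hieq⟩
    have := Finset.mem_range.mp hi; omega
  -- descend on the prefix
  obtain ⟨h1, hc1, hb1⟩ := descend T Eh hlvl hpar k i0 f
    (fun i hi => hadj i (by omega)) (fun i hi => hmin i (by omega)) hi0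
  -- descend on the reversed suffix
  obtain ⟨h2, hc2, hb2⟩ := descend T Eh hlvl hpar k (d - i0) (fun i => f (d - i))
    (fun i hi => by
      have h3 : d - i = (d - (i+1)) + 1 := by omega
      have := (hadj (d - (i+1)) (by omega)).symm
      show (augGraph T Eh).Adj (f (d - i)) (f (d - (i+1)))
      rw [h3]; exact this)
    (fun i hi => hmin (d - i) (by omega))
    (by show lvl T (f (d - (d - i0))) = k; rw [show d - (d - i0) = i0 by omega]; exact hi0)
  rw [show d - 0 = d by omega] at hc2
  rw [hfd] at hc2
  rw [show d - (d - i0) = i0 by omega] at hc2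
  rw [hf0] at hc1
  have hc2' := chain_reverse (fun a b hab => ⟨es_symm Eh hab.1, hab.2.2, hab.2.1⟩) hc2
  have hcc : Chain' (HStep T Eh k) (h1 + h2) (anc T k x) (anc T k y) :=
    chain_append hc1 hc2'
  have hkx : k ≤ lvl T x := by have := hmin 0 (by omega); rwa [hf0] at this
  have hky : k ≤ lvl T y := by have := hmin d (by omega); rwa [hfd] at this
  -- counting
  have hcount : (h1 + h2) + (lvl T x - k) + (lvl T y - k) ≤ d := by
    rw [hf0] at hb1
    have hb2' : h2 + (lvl T y - k) ≤ d - i0 := by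
      rw [show d - 0 = d by omega, hfd] at hb2; exact hb2
    omega
  -- upper bound on d
  have hup : d ≤ (lvl T x - k) + (lvl T y - k) + (augGraph T Eh).dist (anc T k x) (anc T k y) := by
    have t1 : (augGraph T Eh).dist x (anc T k x) ≤ lvl T x - k := dist_anc T Eh hkx
    have t2 : (augGraph T Eh).dist (anc T k y) y ≤ lvl T y - k := by
      rw [SimpleGraph.dist_comm]; exact dist_anc T Eh hky
    have tri1 : (augGraph T Eh).dist x y ≤ (augGraph T Eh).dist x (anc T k x) +
        (augGraph T Eh).dist (anc T k x) y := (augConn T Eh).dist_triangle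
    have tri2 : (augGraph T Eh).dist (anc T k x) y ≤
        (augGraph T Eh).dist (anc T k x) (anc T k y) +
        (augGraph T Eh).dist (anc T k y) y := (augConn T Eh).dist_triangle
    omega
  have hdle : (augGraph T Eh).dist (anc T k x) (anc T k y) ≤ h1 + h2 :=
    chain_dist (augConn T Eh)
      (fun a b hab => Or.inl (es_adj T Eh hsymm hne hab.1)) hcc
  have heq : d = (lvl T x - k) + (lvl T y - k) + (h1 + h2) := by omega
  have hdanc : (augGraph T Eh).dist (anc T k x) (anc T k y) = h1 + h2 := by omega
  -- the horizontal chain is a horizontal geodesic, hence short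
  have hhL : h1 + h2 ≤ L := by
    obtain ⟨w, hw0, hwh, hws⟩ := hcc
    refine hL (h1 + h2) w ⟨?_, ?_, ?_⟩
    · intro i hi
      exact ⟨es_eh Eh hsymm (hws i hi).1, es_ne Eh hsymm hne (hws i hi).1⟩
    · intro i hi
      rcases Nat.eq_zero_or_pos i with h | h
      · rw [h]
      · have hlvi : lvl T (w i) = k := by
          have := (hws (i-1) (by omega)).2.2
          rwa [show i - 1 + 1 = i by omega] at this
        have hlv0 : lvl T (w 0) = k := (hws 0 (by omega)).2.1
        rw [hlvi, hlv0]
    · rw [hw0, hwh]; exact hdanc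
  exact ⟨k, h1 + h2, hkx, hky, hhL, hcc, heq⟩

end Main

/-- A pre-augmented tree is Gromov hyperbolic iff the lengths of its horizontal
geodesics are uniformly bounded. -/
theorem preaugmented_hyperbolic_iff_bounded_horizontal_geodesics
    (T : RootedTree X) (Eh : X → X → Prop)
    (hsymm : ∀ x y, Eh x y → Eh y x)
    (hne : ∀ x y, Eh x y → x ≠ y)
    (hlvl : ∀ x y, Eh x y → lvl T x = lvl T y)
    (hpar : ∀ x y p q, Eh x y → IsParent T p x → IsParent T q y → p = q ∨ Eh p q) :
    GromovHyperbolic (augGraph T Eh) T.root ↔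
      ∃ L : ℕ, 0 < L ∧ ∀ (n : ℕ) (w : ℕ → X), IsHorizGeodesic T Eh n w → n ≤ L := by
  constructor
  · -- hyperbolic → bounded horizontal geodesics
    rintro ⟨δ, hδ0, hδ⟩
    refine ⟨⌊4*δ⌋₊ + 1, by omega, ?_⟩
    rintro n w ⟨hstep, hlev, hdist⟩
    set G := augGraph T Eh with hG
    have hadj : ∀ i < n, G.Adj (w i) (w (i+1)) :=
      fun i hi => ⟨Or.inr (Or.inl (hstep i hi).1), (hstep i hi).2⟩
    have dW : ∀ i j, i ≤ j → j ≤ n → G.dist (w i) (w j) ≤ j - i := by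
      intro i j hij hjn
      have := dist_le_of_chain (augConn T Eh) (fun t => w (i + t)) (j - i)
        (fun t ht => Or.inl (by
          show G.Adj (w (i + t)) (w (i + (t+1)))
          rw [show i + (t+1) = (i + t) + 1 by omega]
          exact hadj (i+t) (by omega)))
      simpa [show i + (j - i) = j from by omega] using this
    set q := n / 2 with hq
    have hqn : q ≤ n - q ∧ n - q ≤ n ∧ q ≤ n := by omega
    have t1 := dW 0 q (by omega) (by omega)
    have t2 := dW q n (by omega) (by omega)
    have tri : G.dist (w 0) (w n) ≤ G.dist (w 0) (w q) + G.dist (w q) (w n) :=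
      (augConn T Eh).dist_triangle
    rw [show q - 0 = q by omega] at t1
    have d1 : G.dist (w 0) (w q) = q := by omega
    have d2 : G.dist (w q) (w n) = n - q := by omega
    have dr : ∀ i ≤ n, G.dist T.root (w i) = lvl T (w 0) := by
      intro i hi
      rw [dist_root T Eh hlvl (w i), hlev i hi]
    have key := hδ (w 0) (w n) (w q)
    have e1 : gprod G T.root (w 0) (w q) =
        ((lvl T (w 0) : ℝ) + (lvl T (w 0) : ℝ) - (q : ℝ)) / 2 := by
      rw [gprod, dr 0 (by omega), dr q (by omega), d1]
    have e2 : gprod G T.root (w q) (w n) =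
        ((lvl T (w 0) : ℝ) + (lvl T (w 0) : ℝ) - ((n : ℝ) - (q : ℝ))) / 2 := by
      rw [gprod, dr q (by omega), dr n (by omega), d2]
      rw [Nat.cast_sub (by omega)]
    have e3 : gprod G T.root (w 0) (w n) =
        ((lvl T (w 0) : ℝ) + (lvl T (w 0) : ℝ) - (n : ℝ)) / 2 := by
      rw [gprod, dr 0 (by omega), dr n (by omega), hdist]
    rw [e1, e2, e3] at key
    have hqr : (q : ℝ) ≤ (n : ℝ) - (q : ℝ) := by
      have : (q : ℝ) + (q : ℝ) ≤ (n : ℝ) := by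
        have : q + q ≤ n := by omega
        exact_mod_cast this
      linarith
    rw [min_eq_right (by linarith)] at key
    -- key : (2m - (n - q))/2 - δ ≤ (2m - n)/2, so q ≤ 2δ
    have hq2 : (q : ℝ) ≤ 2 * δ := by linarith
    have hn2 : (n : ℝ) ≤ 2 * (q : ℝ) + 1 := by
      have : n ≤ 2 * q + 1 := by omega
      exact_mod_cast this
    have hfl : (4 * δ : ℝ) < (⌊4*δ⌋₊ : ℝ) + 1 := Nat.lt_floor_add_one _
    by_contra hcon
    push_neg at hcon
    have h2n : ((⌊4*δ⌋₊ + 2 : ℕ) : ℝ) ≤ (n : ℝ) := Nat.cast_le.mpr (by omega)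
    push_cast at h2n
    linarith
  · -- bounded horizontal geodesics → hyperbolic
    rintro ⟨L, hL0, hL⟩
    refine ⟨L, by positivity, ?_⟩
    intro x y z
    set G := augGraph T Eh with hG
    obtain ⟨k1, h1, hk1x, hk1z, hh1, hc1, hd1⟩ := normal_form T Eh hsymm hne hlvl hpar hL x z
    obtain ⟨k2, h2, hk2z, hk2y, hh2, hc2, hd2⟩ := normal_form T Eh hsymm hne hlvl hpar hL z y
    set m := min k1 k2 with hm
    have hm1 : m ≤ k1 := min_le_left _ _
    have hm2 : m ≤ k2 := min_le_right _ _
    have hmx : m ≤ lvl T x := le_trans hm1 hk1x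
    have hmy : m ≤ lvl T y := le_trans hm2 hk2y
    have hmz : m ≤ lvl T z := le_trans hm1 hk1z
    -- project the two chains down to level m
    have hstep1 : ∀ a b, HStep T Eh k1 a b → LStep T Eh m (anc T m a) (anc T m b) := by
      intro a b hab
      have hla : lvl T a = k1 := hab.2.1
      have hlb : lvl T b = k1 := hab.2.2
      refine ⟨?_, by rw [anc_lvl T (by omega)], by rw [anc_lvl T (by omega)]⟩
      have := es_proj T Eh hlvl hpar m (k1 - m) a b hab.1 (by omega) (by omega)
      exact this
    have hstep2 : ∀ a b, HStep T Eh k2 a b → LStep T Eh m (anc T m a) (anc T m b) := by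
      intro a b hab
      have hla : lvl T a = k2 := hab.2.1
      have hlb : lvl T b = k2 := hab.2.2
      refine ⟨?_, by rw [anc_lvl T (by omega)], by rw [anc_lvl T (by omega)]⟩
      exact es_proj T Eh hlvl hpar m (k2 - m) a b hab.1 (by omega) (by omega)
    have hp1 : Chain' (LStep T Eh m) h1 (anc T m x) (anc T m z) := by
      have := chain_map (anc T m) hstep1 hc1
      rwa [anc_anc T hm1 hk1x, anc_anc T hm1 hk1z] at this
    have hp2 : Chain' (LStep T Eh m) h2 (anc T m z) (anc T m y) := by
      have := chain_map (anc T m) hstep2 hc2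
      rwa [anc_anc T hm2 hk2z, anc_anc T hm2 hk2y] at this
    have hpc : Chain' (LStep T Eh m) (h1 + h2) (anc T m x) (anc T m y) :=
      chain_append hp1 hp2
    have hdanc : G.dist (anc T m x) (anc T m y) ≤ h1 + h2 := by
      refine chain_dist (augConn T Eh) ?_ hpc
      intro a b hab
      rcases hab.1 with h | h
      · exact Or.inr h
      · exact Or.inl (es_adj T Eh hsymm hne h)
    have hup : G.dist x y ≤ (lvl T x - m) + (lvl T y - m) + (h1 + h2) := by
      have t1 : G.dist x (anc T m x) ≤ lvl T x - m := dist_anc T Eh hmx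
      have t2 : G.dist (anc T m y) y ≤ lvl T y - m := by
        rw [SimpleGraph.dist_comm]; exact dist_anc T Eh hmy
      have tri1 : G.dist x y ≤ G.dist x (anc T m x) + G.dist (anc T m x) y :=
        (augConn T Eh).dist_triangle
      have tri2 : G.dist (anc T m x) y ≤ G.dist (anc T m x) (anc T m y) +
          G.dist (anc T m y) y := (augConn T Eh).dist_triangle
      omega
    -- now the real arithmetic
    have ha : (G.dist T.root x : ℝ) = (lvl T x : ℝ) := by rw [dist_root T Eh hlvl x]
    have hb : (G.dist T.root y : ℝ) = (lvl T y : ℝ) := by rw [dist_root T Eh hlvl y]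
    have hc : (G.dist T.root z : ℝ) = (lvl T z : ℝ) := by rw [dist_root T Eh hlvl z]
    have exz : gprod G T.root x z ≤ (k1 : ℝ) := by
      rw [gprod, ha, hc, hd1]
      rw [Nat.cast_add, Nat.cast_add, Nat.cast_sub hk1x, Nat.cast_sub hk1z]
      have : (0:ℝ) ≤ (h1 : ℝ) := Nat.cast_nonneg _
      linarith
    have ezy : gprod G T.root z y ≤ (k2 : ℝ) := by
      rw [gprod, hc, hb, hd2]
      rw [Nat.cast_add, Nat.cast_add, Nat.cast_sub hk2z, Nat.cast_sub hk2y]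
      have : (0:ℝ) ≤ (h2 : ℝ) := Nat.cast_nonneg _
      linarith
    have exy : (m : ℝ) - (L : ℝ) ≤ gprod G T.root x y := by
      rw [gprod, ha, hb]
      have hcast : (G.dist x y : ℝ) ≤ ((lvl T x : ℝ) - m) + ((lvl T y : ℝ) - m) + h1 + h2 := by
        have := hup
        have hcc : ((G.dist x y : ℕ) : ℝ) ≤ (((lvl T x - m) + (lvl T y - m) + (h1 + h2) : ℕ) : ℝ) :=
          Nat.cast_le.mpr this
        rw [Nat.cast_add, Nat.cast_add, Nat.cast_sub hmx, Nat.cast_sub hmy, Nat.cast_add] at hcc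
        linarith
      have hh1' : (h1 : ℝ) ≤ (L : ℝ) := Nat.cast_le.mpr hh1
      have hh2' : (h2 : ℝ) ≤ (L : ℝ) := Nat.cast_le.mpr hh2
      linarith
    have hmin : min (gprod G T.root x z) (gprod G T.root z y) ≤ (m : ℝ) := by
      rcases le_total k1 k2 with h | h
      · have : m = k1 := min_eq_left h
        rw [this]
        exact le_trans (min_le_left _ _) exz
      · have : m = k2 := min_eq_right h
        rw [this]
        exact le_trans (min_le_right _ _) ezy
    linarith


end HypIFS
end

section
/- In an augmented tree induced by Φ satisfying (A1) and (A2): for every geodesic ray (x_n)_{n≥0}, the intersection ⋂_{n≥0} Φ(x_n) is a singleton; and if (x_n) and (y_n) are geodesic rays for which there is a constant c > 0 with graph distance d(x_n, y_n) ≤ c for all sufficiently large n, then ⋂_{n≥0} Φ(x_n) = ⋂_{n≥0} Φ(y_n). -/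
open Metric Filter

namespace HypIFS

variable {X : Type*}

/-- The distance `dist(A, B)` between two subsets of a metric space. -/
noncomputable def setDist {E : Type*} [PseudoMetricSpace E] (A B : Set E) : ℝ :=
  sInf (Set.image2 dist A B)

/-- The horizontal edge set `𝓔_h` induced by the set-valued map `Φ`:
`(x,y) ∈ 𝓔_h` iff `|x| = |y|`, `x ≠ y` and `dist(Φ(x), Φ(y)) ≤ κ r^{|x|}`. -/
def EhPhi {d : ℕ} (T : RootedTree X) (Φ : X → Set (EuclideanSpace ℝ (Fin d)))
    (r κ : ℝ) (x y : X) : Prop :=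
  lvl T x = lvl T y ∧ x ≠ y ∧ setDist (Φ x) (Φ y) ≤ κ * r ^ lvl T x

/-- A geodesic ray: `x 0` is the root, `|x n| = n`, and consecutive vertices are
joined by vertical (tree) edges. -/
def IsGeodesicRay (T : RootedTree X) (x : ℕ → X) : Prop :=
  x 0 = T.root ∧ ∀ n : ℕ, lvl T (x n) = n ∧ T.G.Adj (x n) (x (n + 1))

private lemma tree_path_length_eq {V : Type*} {G : SimpleGraph V} (hT : G.IsTree)
    {u v : V} (p : G.Walk u v) (hp : p.IsPath) : p.length = G.dist u v := by
  classical
  obtain ⟨w, hw⟩ := (hT.isConnected u v).exists_walk_length_eq_dist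
  have h1 : w.bypass.length ≤ G.dist u v := hw ▸ w.length_bypass_le
  have h2 : p = w.bypass := by
    obtain ⟨q, -, hq⟩ := hT.existsUnique_path u v
    rw [hq p hp, hq w.bypass w.bypass_isPath]
  exact le_antisymm (h2 ▸ h1) (SimpleGraph.dist_le p)

private lemma tree_adj_dist {V : Type*} {G : SimpleGraph V} (hT : G.IsTree) (o : V)
    {u v : V} (h : G.Adj u v) :
    G.dist o v = G.dist o u + 1 ∨ G.dist o u = G.dist o v + 1 := by
  classical
  obtain ⟨P, hP, -⟩ := hT.existsUnique_path o u
  have hPl : P.length = G.dist o u := tree_path_length_eq hT P hP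
  by_cases hv : v ∈ P.support
  · right
    have h1 : G.dist o v ≤ (P.takeUntil v hv).length := SimpleGraph.dist_le _
    have h2 : G.dist v u ≤ (P.dropUntil v hv).length := SimpleGraph.dist_le _
    have h3 : (P.takeUntil v hv).length + (P.dropUntil v hv).length = P.length := by
      have := congr_arg SimpleGraph.Walk.length (P.take_spec hv)
      rwa [SimpleGraph.Walk.length_append] at this
    have hdvu : G.dist v u = 1 := SimpleGraph.dist_eq_one_iff_adj.2 h.symm
    have htri : G.dist o u ≤ G.dist o v + G.dist v u :=
      hT.isConnected.dist_triangle
    omega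
  · left
    have hconc : (P.concat h).IsPath := by
      have : (P.concat h).reverse.IsPath := by
        rw [SimpleGraph.Walk.reverse_concat]
        refine SimpleGraph.Walk.IsPath.cons hP.reverse ?_
        rwa [SimpleGraph.Walk.support_reverse, List.mem_reverse]
      have := this.reverse; rwa [SimpleGraph.Walk.reverse_reverse] at this
    have := tree_path_length_eq hT (P.concat h) hconc
    rw [SimpleGraph.Walk.length_concat, hPl] at this
    omega

private lemma setDist_attained {E : Type*} [MetricSpace E] {A B : Set E}
    (hA : IsCompact A) (hB : IsCompact B) (hAne : A.Nonempty) (hBne : B.Nonempty) :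
    ∃ p ∈ A, ∃ q ∈ B, dist p q = setDist A B := by
  have himg : Set.image2 dist A B = (fun z : E × E => dist z.1 z.2) '' (A ×ˢ B) :=
    (Set.image_prod _).symm
  have hc : IsCompact (Set.image2 dist A B) := by
    rw [himg]; exact (hA.prod hB).image continuous_dist
  have hne : (Set.image2 dist A B).Nonempty := Set.Nonempty.image2 hAne hBne
  have := hc.sInf_mem hne
  rw [Set.mem_image2] at this
  obtain ⟨p, hp, q, hq, hpq⟩ := this
  exact ⟨p, hp, q, hq, hpq⟩

/-- For every geodesic ray, `⋂ₙ Φ(xₙ)` is a singleton; and two geodesic rays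
staying at uniformly bounded distance from each other determine the same
intersection. -/
theorem ray_intersection_singleton_and_welldefined {d : ℕ} (T : RootedTree X)
    (Φ : X → Set (EuclideanSpace ℝ (Fin d))) (δ₀ r κ : ℝ)
    (hδ₀ : 1 < δ₀) (hr0 : 0 < r) (hr1 : r < 1) (hκ : 0 < κ)
    (hΦc : ∀ x, IsCompact (Φ x)) (hΦne : ∀ x, (Φ x).Nonempty)
    (hA1 : ∀ p x, IsParent T p x → Φ x ⊆ Φ p)
    (hA2 : ∀ x, δ₀⁻¹ * r ^ lvl T x ≤ diam (Φ x) ∧ diam (Φ x) ≤ δ₀ * r ^ lvl T x) :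
    (∀ x : ℕ → X, IsGeodesicRay T x → ∃ a, (⋂ n : ℕ, Φ (x n)) = {a}) ∧
    (∀ x y : ℕ → X, IsGeodesicRay T x → IsGeodesicRay T y →
      (∃ c : ℕ, 0 < c ∧ ∃ N : ℕ, ∀ n ≥ N,
        (augGraph T (EhPhi T Φ r κ)).dist (x n) (y n) ≤ c) →
      (⋂ n : ℕ, Φ (x n)) = ⋂ n : ℕ, Φ (y n)) := by
  classical
  have hδ0 : (0:ℝ) < δ₀ := lt_trans one_pos hδ₀
  set C : ℝ := 2 * δ₀ + κ with hCdef
  have hC0 : (0:ℝ) < C := by positivity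
  have hrpow : ∀ {m n : ℕ}, m ≤ n → r ^ n ≤ r ^ m :=
    fun h => pow_le_pow_of_le_one hr0.le hr1.le h
  have hnest : ∀ x : ℕ → X, IsGeodesicRay T x → ∀ m n : ℕ, m ≤ n → Φ (x n) ⊆ Φ (x m) := by
    intro x hx m n hmn
    induction n, hmn using Nat.le_induction with
    | base => exact subset_rfl
    | succ n hmn ih =>
      refine subset_trans (hA1 (x n) (x (n+1)) ?_) ih
      exact ⟨(hx.2 n).2, by rw [(hx.2 n).1, (hx.2 (n+1)).1]⟩
  have htend0 : Tendsto (fun n : ℕ => r ^ n) atTop (nhds 0) :=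
    tendsto_pow_atTop_nhds_zero_of_lt_one hr0.le hr1
  have key : ∀ x : ℕ → X, IsGeodesicRay T x →
      ∃ a, a ∈ (⋂ n : ℕ, Φ (x n)) ∧ (⋂ n : ℕ, Φ (x n)) = {a} := by
    intro x hx
    obtain ⟨a, ha⟩ := IsCompact.nonempty_iInter_of_sequence_nonempty_isCompact_isClosed
      (fun n => Φ (x n)) (fun n => hnest x hx n (n+1) (Nat.le_succ n)) (fun n => hΦne _)
      (hΦc _) (fun n => (hΦc _).isClosed)
    refine ⟨a, ha, ?_⟩
    ext b
    simp only [Set.mem_singleton_iff]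
    constructor
    · intro hb
      have hd : ∀ n : ℕ, dist b a ≤ δ₀ * r ^ n := by
        intro n
        calc dist b a ≤ diam (Φ (x n)) :=
              dist_le_diam_of_mem (hΦc (x n)).isBounded (Set.mem_iInter.1 hb n)
                (Set.mem_iInter.1 ha n)
          _ ≤ δ₀ * r ^ lvl T (x n) := (hA2 _).2
          _ = δ₀ * r ^ n := by rw [(hx.2 n).1]
      have htd : Tendsto (fun n : ℕ => δ₀ * r ^ n) atTop (nhds 0) := by
        simpa using htend0.const_mul δ₀
      have : dist b a ≤ 0 := ge_of_tendsto' htd hd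
      exact dist_le_zero.1 this
    · intro hb; rw [hb]; exact ha
  refine ⟨fun x hx => (key x hx).imp (fun a h => h.2), ?_⟩
  rintro x y hx hy ⟨c, hc, N, hN⟩
  obtain ⟨a, haI, haEq⟩ := key x hx
  obtain ⟨b, hbI, hbEq⟩ := key y hy
  suffices hab : a = b by rw [haEq, hbEq, hab]
  set Gaug := augGraph T (EhPhi T Φ r κ) with hGaugdef
  -- level change along an augmented edge
  have hadj_lvl : ∀ u v : X, Gaug.Adj u v → lvl T u ≤ lvl T v + 1 := by
    intro u v h
    rcases h.1 with ht | he | he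
    · rcases tree_adj_dist T.isTree T.root ht with h' | h' <;> (unfold lvl; omega)
    · rw [he.1]; omega
    · rw [← he.1]; omega
  -- metric bound along an augmented edge
  have hedge : ∀ u v : X, Gaug.Adj u v → ∀ p ∈ Φ u, ∀ q ∈ Φ v,
      dist p q ≤ C * r ^ (lvl T u - 1) := by
    intro u v h p hp q hq
    rcases h.1 with ht | he | he
    · rcases tree_adj_dist T.isTree T.root ht with h' | h'
      · -- lvl v = lvl u + 1 : v is a child of u
        have hq' : q ∈ Φ u := hA1 u v ⟨ht, h'.symm⟩ hq
        calc dist p q ≤ diam (Φ u) := dist_le_diam_of_mem (hΦc u).isBounded hp hq'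
          _ ≤ δ₀ * r ^ lvl T u := (hA2 u).2
          _ ≤ C * r ^ (lvl T u - 1) := by
              refine mul_le_mul (by rw [hCdef]; linarith) (hrpow (Nat.sub_le _ _))
                (by positivity) hC0.le
      · -- lvl u = lvl v + 1 : u is a child of v
        have hp' : p ∈ Φ v := hA1 v u ⟨ht.symm, h'.symm⟩ hp
        have hlv : lvl T v = lvl T u - 1 := by unfold lvl; omega
        calc dist p q ≤ diam (Φ v) := dist_le_diam_of_mem (hΦc v).isBounded hp' hq
          _ ≤ δ₀ * r ^ lvl T v := (hA2 v).2
          _ ≤ C * r ^ (lvl T u - 1) := by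
              rw [hlv]; exact mul_le_mul_of_nonneg_right (by rw [hCdef]; linarith)
                (by positivity)
    · obtain ⟨hlvl, -, hsd0⟩ := he
      obtain ⟨p', hp', q', hq', hpq'⟩ :=
        setDist_attained (hΦc u) (hΦc v) (hΦne u) (hΦne v)
      have hsd : dist p' q' ≤ κ * r ^ lvl T u := hpq' ▸ hsd0
      have h1 : dist p p' ≤ δ₀ * r ^ lvl T u :=
        le_trans (dist_le_diam_of_mem (hΦc u).isBounded hp hp') (hA2 u).2
      have h2 : dist q' q ≤ δ₀ * r ^ lvl T u := by
        refine le_trans (dist_le_diam_of_mem (hΦc v).isBounded hq' hq) ?_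
        rw [hlvl]; exact (hA2 v).2
      calc dist p q ≤ dist p p' + dist p' q' + dist q' q := dist_triangle4 p p' q' q
        _ ≤ δ₀ * r ^ lvl T u + κ * r ^ lvl T u + δ₀ * r ^ lvl T u :=
            add_le_add (add_le_add h1 hsd) h2
        _ = C * r ^ lvl T u := by rw [hCdef]; ring
        _ ≤ C * r ^ (lvl T u - 1) :=
            mul_le_mul_of_nonneg_left (hrpow (Nat.sub_le _ _)) hC0.le
    · obtain ⟨hlvl, -, hsd0⟩ := he
      obtain ⟨p', hp', q', hq', hpq'⟩ :=
        setDist_attained (hΦc v) (hΦc u) (hΦne v) (hΦne u)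
      have hsd : dist q' p' ≤ κ * r ^ lvl T u := by
        rw [dist_comm, hpq']; rw [hlvl] at hsd0; exact hsd0
      have h1 : dist p q' ≤ δ₀ * r ^ lvl T u :=
        le_trans (dist_le_diam_of_mem (hΦc u).isBounded hp hq') (hA2 u).2
      have h2 : dist p' q ≤ δ₀ * r ^ lvl T u := by
        refine le_trans (dist_le_diam_of_mem (hΦc v).isBounded hp' hq) ?_
        rw [← hlvl]; exact (hA2 v).2
      calc dist p q ≤ dist p q' + dist q' p' + dist p' q := dist_triangle4 p q' p' q
        _ ≤ δ₀ * r ^ lvl T u + κ * r ^ lvl T u + δ₀ * r ^ lvl T u :=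
            add_le_add (add_le_add h1 hsd) h2
        _ = C * r ^ lvl T u := by rw [hCdef]; ring
        _ ≤ C * r ^ (lvl T u - 1) :=
            mul_le_mul_of_nonneg_left (hrpow (Nat.sub_le _ _)) hC0.le
  -- metric bound along a walk in the augmented graph
  have hwalk : ∀ (u v : X) (w : Gaug.Walk u v), ∀ p ∈ Φ u, ∀ q ∈ Φ v,
      dist p q ≤ C * (w.length + 1) * r ^ (lvl T u - w.length) := by
    intro u v w
    induction w with
    | nil =>
      intro p hp q hq
      simp only [SimpleGraph.Walk.length_nil, Nat.cast_zero, Nat.sub_zero, zero_add, mul_one]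
      calc dist p q ≤ diam (Φ _) := dist_le_diam_of_mem (hΦc _).isBounded hp hq
        _ ≤ δ₀ * r ^ lvl T _ := (hA2 _).2
        _ ≤ C * r ^ lvl T _ := mul_le_mul_of_nonneg_right (by rw [hCdef]; linarith)
            (by positivity)
    | @cons u' v' w' h wtail ih =>
      intro p hp q hq
      obtain ⟨m, hm⟩ := hΦne v'
      have hlen : (SimpleGraph.Walk.cons h wtail).length = wtail.length + 1 :=
        SimpleGraph.Walk.length_cons _ _
      have hE1 : lvl T u' - (wtail.length + 1) ≤ lvl T u' - 1 := by omega
      have hE2 : lvl T u' - (wtail.length + 1) ≤ lvl T v' - wtail.length := by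
        have := hadj_lvl u' v' h
        omega
      have hb1 : dist p m ≤ C * r ^ (lvl T u' - (wtail.length + 1)) :=
        le_trans (hedge u' v' h p hp m hm)
          (mul_le_mul_of_nonneg_left (hrpow hE1) hC0.le)
      have hb2 : dist m q ≤ C * (wtail.length + 1) * r ^ (lvl T u' - (wtail.length + 1)) :=
        le_trans (ih m hm q hq)
          (mul_le_mul_of_nonneg_left (hrpow hE2) (by positivity))
      calc dist p q ≤ dist p m + dist m q := dist_triangle p m q
        _ ≤ C * r ^ (lvl T u' - (wtail.length + 1))
            + C * (wtail.length + 1) * r ^ (lvl T u' - (wtail.length + 1)) :=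
              add_le_add hb1 hb2
        _ = C * ((wtail.length + 1 : ℕ) + 1) * r ^ (lvl T u' - (wtail.length + 1)) := by
              push_cast; ring
        _ = C * ((SimpleGraph.Walk.cons h wtail).length + 1)
            * r ^ (lvl T u' - (SimpleGraph.Walk.cons h wtail).length) := by
              rw [hlen]
  -- the augmented graph is connected
  have hle : T.G ≤ Gaug := by
    intro u v huv
    exact ⟨Or.inl huv, huv.ne⟩
  have hconn : Gaug.Connected := T.isTree.isConnected.mono hle
  -- final bound
  have hbound : ∀ n ≥ N, dist a b ≤ C * (c + 1) * r ^ (n - c) := by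
    intro n hn
    obtain ⟨w, hw⟩ := (hconn (x n) (y n)).exists_walk_length_eq_dist
    have hwc : w.length ≤ c := hw ▸ hN n hn
    have hxa : a ∈ Φ (x n) := Set.mem_iInter.1 haI n
    have hyb : b ∈ Φ (y n) := Set.mem_iInter.1 hbI n
    have := hwalk (x n) (y n) w a hxa b hyb
    rw [(hx.2 n).1] at this
    calc dist a b ≤ C * (w.length + 1) * r ^ (n - w.length) := this
      _ ≤ C * (c + 1) * r ^ (n - c) := by
          refine mul_le_mul (mul_le_mul_of_nonneg_left ?_ hC0.le)
            (hrpow (by omega)) (by positivity) (by positivity)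
          exact_mod_cast Nat.add_le_add_right hwc 1
  have htd : Tendsto (fun n : ℕ => C * (c + 1) * r ^ (n - c)) atTop (nhds 0) := by
    have h2 : Tendsto (fun n : ℕ => n - c) atTop atTop := tendsto_sub_atTop_nat c
    have := (htend0.comp h2).const_mul (C * (c + 1))
    simpa using this
  have : dist a b ≤ 0 := ge_of_tendsto htd (eventually_atTop.2 ⟨N, hbound⟩)
  exact dist_le_zero.1 this

end HypIFS
end
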